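/- Let X be a metacompact Moore space. There is a function r assigning to each collection U of open subsets of X a collection r(U) of open subsets such that: r(U) is point-finite; each member of r(U) is contained in some member of U; ∪r(U) = ∪U; if G, H ∈ r(U) with G ⊆ H then G = H; and if every member of U is contained in some member of an open collection V, then every member of r(U) is contained in some member of r(V). -/

import Mathlib

open Set TopologicalSpace

def PointFinite {X : Type*} (C : Set (Set X)) : Prop :=
  ∀ x : X, {U ∈ C | x ∈ U}.Finite

def Refines {X : Type*} (A B : Set (Set X)) : Prop :=
  ∀ U ∈ A, ∃ V ∈ B, U ⊆ V

def IsOpenCoverOfSets {X : Type*} [TopologicalSpace X] (C : Set (Set X)) : Prop :=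
  (∀ U ∈ C, IsOpen U) ∧ ⋃₀ C = Set.univ

def MonotonicallyMetacompact (X : Type*) [TopologicalSpace X] : Prop :=
  ∃ r : Set (Set X) → Set (Set X),
    (∀ U, IsOpenCoverOfSets U →
      IsOpenCoverOfSets (r U) ∧ PointFinite (r U) ∧ Refines (r U) U) ∧
    (∀ U V, IsOpenCoverOfSets U → IsOpenCoverOfSets V → Refines U V → Refines (r U) (r V))

def MonotonicallyCountablyMetacompact (X : Type*) [TopologicalSpace X] : Prop :=
  ∃ r : Set (Set X) → Set (Set X),
    (∀ U, IsOpenCoverOfSets U → U.Countable →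
      IsOpenCoverOfSets (r U) ∧ PointFinite (r U) ∧ Refines (r U) U) ∧
    (∀ U V, IsOpenCoverOfSets U → IsOpenCoverOfSets V → U.Countable → V.Countable →
      Refines U V → Refines (r U) (r V))

def IsPerfectSpace (X : Type*) [TopologicalSpace X] : Prop :=
  ∀ C : Set X, IsClosed C → ∃ f : ℕ → Set X, (∀ n, IsOpen (f n)) ∧ C = ⋂ n, f n

def St {X : Type*} (x : X) (C : Set (Set X)) : Set X := ⋃₀ {G ∈ C | x ∈ G}

def IsDevelopment {X : Type*} [TopologicalSpace X] (G : ℕ → Set (Set X)) : Prop :=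
  (∀ n, IsOpenCoverOfSets (G n)) ∧
  ∀ x : X, ∀ U : Set X, IsOpen U → x ∈ U → ∃ n, St x (G n) ⊆ U

def IsMooreSpace (X : Type*) [TopologicalSpace X] : Prop :=
  RegularSpace X ∧ T1Space X ∧ ∃ G : ℕ → Set (Set X), IsDevelopment G

def Metacompact (X : Type*) [TopologicalSpace X] : Prop :=
  ∀ U : Set (Set X), IsOpenCoverOfSets U →
    ∃ V, IsOpenCoverOfSets V ∧ PointFinite V ∧ Refines V U

set_option linter.unusedSectionVars false

section Aux
variable {X : Type*} [TopologicalSpace X]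

lemma refines_refl (A : Set (Set X)) : Refines A A := fun g hg => ⟨g, hg, subset_rfl⟩

lemma refines_trans {A B C : Set (Set X)} (h1 : Refines A B) (h2 : Refines B C) :
    Refines A C := by
  intro g hg
  obtain ⟨b, hb, hgb⟩ := h1 g hg
  obtain ⟨c, hc, hbc⟩ := h2 b hb
  exact ⟨c, hc, hgb.trans hbc⟩

/-- Existence of a point-finite nested development. -/
lemma exists_nice_development (h2 : Metacompact X)
    (G : ℕ → Set (Set X)) (hGc : ∀ n, IsOpenCoverOfSets (G n))
    (hGd : ∀ x : X, ∀ U : Set X, IsOpen U → x ∈ U → ∃ n, St x (G n) ⊆ U) :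
    ∃ H : ℕ → Set (Set X), (∀ n, IsOpenCoverOfSets (H n)) ∧ (∀ n, PointFinite (H n)) ∧
      (∀ m n, m ≤ n → Refines (H n) (H m)) ∧
      (∀ x : X, ∀ U : Set X, IsOpen U → x ∈ U → ∃ n, St x (H n) ⊆ U) := by
  classical
  set p : Set (Set X) → Set (Set X) :=
    fun C => if h : IsOpenCoverOfSets C then (h2 C h).choose else {Set.univ} with hp
  have hpspec : ∀ C, IsOpenCoverOfSets C →
      IsOpenCoverOfSets (p C) ∧ PointFinite (p C) ∧ Refines (p C) C := by
    intro C hC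
    simp only [hp, dif_pos hC]
    exact (h2 C hC).choose_spec
  -- intersection of two covers
  have hinter : ∀ A B : Set (Set X), IsOpenCoverOfSets A → IsOpenCoverOfSets B →
      IsOpenCoverOfSets (Set.image2 (· ∩ ·) A B) ∧ Refines (Set.image2 (· ∩ ·) A B) A ∧
        Refines (Set.image2 (· ∩ ·) A B) B := by
    intro A B hA hB
    refine ⟨⟨?_, ?_⟩, ?_, ?_⟩
    · rintro u ⟨a, ha, b, hb, rfl⟩
      exact (hA.1 a ha).inter (hB.1 b hb)
    · apply Set.eq_univ_of_forall
      intro x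
      have hxA : x ∈ ⋃₀ A := hA.2 ▸ mem_univ x
      have hxB : x ∈ ⋃₀ B := hB.2 ▸ mem_univ x
      obtain ⟨a, ha, hxa⟩ := hxA
      obtain ⟨b, hb, hxb⟩ := hxB
      exact ⟨a ∩ b, ⟨a, ha, b, hb, rfl⟩, hxa, hxb⟩
    · rintro u ⟨a, ha, b, hb, rfl⟩
      exact ⟨a, ha, inter_subset_left⟩
    · rintro u ⟨a, ha, b, hb, rfl⟩
      exact ⟨b, hb, inter_subset_right⟩
  set H : ℕ → Set (Set X) :=
    fun n => Nat.rec (p (G 0)) (fun n Hn => p (Set.image2 (· ∩ ·) (G (n+1)) Hn)) n with hH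
  have hmain : ∀ n, IsOpenCoverOfSets (H n) ∧ PointFinite (H n) ∧ Refines (H n) (G n) := by
    intro n
    induction n with
    | zero =>
      obtain ⟨a, b, c⟩ := hpspec (G 0) (hGc 0)
      exact ⟨a, b, c⟩
    | succ n ih =>
      have hic := (hinter (G (n+1)) (H n) (hGc (n+1)) ih.1)
      obtain ⟨a, b, c⟩ := hpspec _ hic.1
      exact ⟨a, b, refines_trans c hic.2.1⟩
  have hstep : ∀ n, Refines (H (n+1)) (H n) := by
    intro n
    have hic := (hinter (G (n+1)) (H n) (hGc (n+1)) (hmain n).1)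
    exact refines_trans (hpspec _ hic.1).2.2 hic.2.2
  have hnest : ∀ m n, m ≤ n → Refines (H n) (H m) := by
    intro m n hmn
    induction n with
    | zero => rw [Nat.le_zero.mp hmn]; exact refines_refl _
    | succ n ih =>
      rcases Nat.lt_or_ge m (n+1) with h | h
      · exact refines_trans (hstep n) (ih (Nat.lt_succ_iff.mp h))
      · rw [Nat.le_antisymm hmn h]; exact refines_refl _
  refine ⟨H, fun n => (hmain n).1, fun n => (hmain n).2.1, hnest, ?_⟩
  intro x U hU hxU
  obtain ⟨n, hn⟩ := hGd x U hU hxU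
  refine ⟨n, subset_trans ?_ hn⟩
  rintro y ⟨h, ⟨hhH, hxh⟩, hyh⟩
  obtain ⟨g, hg, hhg⟩ := (hmain n).2.2 h hhH
  exact ⟨g, ⟨hg, hhg hxh⟩, hhg hyh⟩

variable (H : ℕ → Set (Set X))

def Fam (U : Set (Set X)) (n : ℕ) : Set (Set X) :=
  {g | g ∈ H n ∧ ∃ u ∈ U, ∃ x ∈ g, St x (H n) ⊆ u}

def Rfam (U : Set (Set X)) : Set (Set X) :=
  {g | ∃ n, g ∈ Fam H U n ∧ ∀ m < n, ∀ h ∈ Fam H U m, ¬ g ⊆ h}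

def rfun (U : Set (Set X)) : Set (Set X) :=
  {g | g ∈ Rfam H U ∧ ∀ h ∈ Rfam H U, g ⊆ h → g = h}

lemma Fam_refines {U : Set (Set X)} {n : ℕ} {g : Set X} (hg : g ∈ Fam H U n) :
    ∃ u ∈ U, g ⊆ u := by
  obtain ⟨hgH, u, hu, x, hxg, hst⟩ := hg
  have hsub : g ⊆ St x (H n) := fun y hy => ⟨g, ⟨hgH, hxg⟩, hy⟩
  exact ⟨u, hu, hsub.trans hst⟩

lemma Rfam_refines {U : Set (Set X)} : Refines (Rfam H U) U := by
  rintro g ⟨n, hgn, -⟩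
  exact Fam_refines H hgn

variable (hcov : ∀ n, IsOpenCoverOfSets (H n)) (hpf : ∀ n, PointFinite (H n))
  (hnest : ∀ m n, m ≤ n → Refines (H n) (H m))
  (hdev : ∀ x : X, ∀ U : Set X, IsOpen U → x ∈ U → ∃ n, St x (H n) ⊆ U)

include hpf hnest hdev in
lemma Rfam_pf {U : Set (Set X)} (hU : ∀ u ∈ U, IsOpen u) : PointFinite (Rfam H U) := by
  intro x
  by_cases hx : x ∈ ⋃₀ U
  · obtain ⟨u, hu, hxu⟩ := hx
    obtain ⟨N, hN⟩ := hdev x u (hU u hu) hxu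
    refine Set.Finite.subset (s := ⋃ n ∈ Set.Iic N, {g ∈ H n | x ∈ g})
      ((Set.finite_Iic N).biUnion (fun n _ => hpf n x)) ?_
    rintro g ⟨⟨n, hgF, hexcl⟩, hxg⟩
    have hnN : n ≤ N := by
      by_contra hc
      have hlt : N < n := Nat.lt_of_not_le hc
      obtain ⟨g', hg', hgg'⟩ := hnest N n hlt.le g hgF.1
      exact hexcl N hlt g' ⟨hg', u, hu, x, hgg' hxg, hN⟩ hgg'
    exact Set.mem_biUnion hnN ⟨hgF.1, hxg⟩
  · have : {g ∈ Rfam H U | x ∈ g} = ∅ := by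
      ext g
      simp only [mem_setOf_eq, mem_empty_iff_false, iff_false, not_and]
      intro hg hxg
      obtain ⟨u, hu, hgu⟩ := Rfam_refines H g hg
      exact hx ⟨u, hu, hgu hxg⟩
    rw [this]; exact finite_empty

include hcov hdev in
lemma Rfam_union {U : Set (Set X)} (hU : ∀ u ∈ U, IsOpen u) :
    ∀ x ∈ ⋃₀ U, ∃ g ∈ Rfam H U, x ∈ g := by
  classical
  rintro x ⟨u, hu, hxu⟩
  obtain ⟨N, hN⟩ := hdev x u (hU u hu) hxu
  have hex : ∃ n, ∃ g ∈ Fam H U n, x ∈ g := by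
    have hxc : x ∈ ⋃₀ H N := (hcov N).2 ▸ mem_univ x
    obtain ⟨h, hh, hxh⟩ := hxc
    exact ⟨N, h, ⟨hh, u, hu, x, hxh, hN⟩, hxh⟩
  obtain ⟨g, hgF, hxg⟩ := Nat.find_spec hex
  refine ⟨g, ⟨Nat.find hex, hgF, ?_⟩, hxg⟩
  intro m hm h hh hgh
  exact Nat.find_min hex hm ⟨h, hh, hgh hxg⟩

include hpf hnest hdev in
lemma exists_max {U : Set (Set X)} (hU : ∀ u ∈ U, IsOpen u) {g : Set X}
    (hg : g ∈ Rfam H U) : ∃ h ∈ rfun H U, g ⊆ h := by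
  obtain ⟨n, ⟨hgH, u, hu, x, hxg, hst⟩, hexcl⟩ := hg
  have hgR : g ∈ Rfam H U := ⟨n, ⟨hgH, u, hu, x, hxg, hst⟩, hexcl⟩
  set S : Set (Set X) := {h | h ∈ Rfam H U ∧ g ⊆ h} with hS
  have hSfin : S.Finite :=
    (Rfam_pf H hpf hnest hdev hU x).subset (fun h ⟨h1, h2⟩ => ⟨h1, h2 hxg⟩)
  have hSne : S.Nonempty := ⟨g, hgR, subset_rfl⟩
  obtain ⟨h, ⟨hhR, hgh⟩, hmax⟩ := Set.Finite.exists_maximalFor id S hSfin hSne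
  exact ⟨h, ⟨hhR, fun k hk hhk => hhk.antisymm (hmax (show k ∈ S from ⟨hk, hgh.trans hhk⟩) hhk)⟩, hgh⟩

lemma Rfam_mono {U V : Set (Set X)} (hUV : Refines U V) :
    ∀ g ∈ Rfam H U, ∃ h ∈ Rfam H V, g ⊆ h := by
  classical
  have hFam : ∀ n, Fam H U n ⊆ Fam H V n := by
    rintro n g ⟨h1, u, hu, y, hy, hst⟩
    obtain ⟨v, hv, huv⟩ := hUV u hu
    exact ⟨h1, v, hv, y, hy, hst.trans huv⟩
  rintro g ⟨n, hgn, -⟩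
  have hex : ∃ m, ∃ h ∈ Fam H V m, g ⊆ h := ⟨n, g, hFam n hgn, subset_rfl⟩
  obtain ⟨h, hhF, hgh⟩ := Nat.find_spec hex
  refine ⟨h, ⟨Nat.find hex, hhF, ?_⟩, hgh⟩
  intro m hm k hk hhk
  exact Nat.find_min hex hm ⟨k, hk, hgh.trans hhk⟩

end Aux

theorem stmt6 {X : Type*} [TopologicalSpace X] (h1 : IsMooreSpace X) (h2 : Metacompact X) :
    ∃ r : Set (Set X) → Set (Set X),
      (∀ U, (∀ u ∈ U, IsOpen u) →
        (∀ g ∈ r U, IsOpen g) ∧ PointFinite (r U) ∧ Refines (r U) U ∧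
        ⋃₀ r U = ⋃₀ U ∧ (∀ G ∈ r U, ∀ H ∈ r U, G ⊆ H → G = H)) ∧
      (∀ U V : Set (Set X), (∀ u ∈ U, IsOpen u) → (∀ v ∈ V, IsOpen v) → Refines U V →
        Refines (r U) (r V)) := by
  obtain ⟨-, -, G, hGc, hGd⟩ := h1
  obtain ⟨H, hcov, hpf, hnest, hdev⟩ := exists_nice_development h2 G hGc hGd
  refine ⟨rfun H, ?_, ?_⟩
  · intro U hU
    refine ⟨?_, ?_, ?_, ?_, ?_⟩
    · rintro g ⟨⟨n, hgF, -⟩, -⟩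
      exact (hcov n).1 g hgF.1
    · intro x
      exact ((Rfam_pf H hpf hnest hdev hU x).subset (fun g hg => ⟨hg.1.1, hg.2⟩))
    · intro g hg
      exact Rfam_refines H g hg.1
    · apply Set.Subset.antisymm
      · rintro x ⟨g, hg, hxg⟩
        obtain ⟨u, hu, hgu⟩ := Rfam_refines H g hg.1
        exact ⟨u, hu, hgu hxg⟩
      · intro x hx
        obtain ⟨g, hg, hxg⟩ := Rfam_union H hcov hdev hU x hx
        obtain ⟨h, hh, hgh⟩ := exists_max H hpf hnest hdev hU hg
        exact ⟨h, hh, hgh hxg⟩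
    · intro g hg h hh hgh
      exact hg.2 h hh.1 hgh
  · intro U V hU hV hUV g hg
    obtain ⟨h, hh, hgh⟩ := Rfam_mono H hUV g hg.1
    obtain ⟨k, hk, hhk⟩ := exists_max H hpf hnest hdev hV hh
    exact ⟨k, hk, hgh.trans hhk⟩
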